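/- arXiv:2510.03940 — 4 statements merged into one kernel-verified Lean document; each statement's English description precedes it below -/
import Mathlib

section
/- Let b ≥ 3 be an integer and let q(x) = Σ_{j=0}^{b-2} (b-1-j)·x^j ∈ ℂ[x] (so q(x) = x^{b-2} + 2x^{b-3} + ... + (b-1)). Then every complex root z of q satisfies |z| > 1. -/
open Polynomial

lemma key_identity (n : ℕ) (z : ℂ) :
    (z - 1) * ∑ j ∈ Finset.range n, ((n : ℂ) - j) * z ^ j
      = (∑ k ∈ Finset.range n, z ^ (k + 1)) - n := by
  induction n with
  | zero => simp
  | succ n ih =>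
    have h1 : ∑ j ∈ Finset.range (n + 1), ((↑(n + 1) : ℂ) - j) * z ^ j
        = (∑ j ∈ Finset.range (n + 1), ((n : ℂ) - j) * z ^ j)
          + ∑ j ∈ Finset.range (n + 1), z ^ j := by
      rw [← Finset.sum_add_distrib]
      refine Finset.sum_congr rfl fun j _ => ?_
      push_cast; ring
    have h2 : (∑ j ∈ Finset.range (n + 1), ((n : ℂ) - j) * z ^ j)
        = ∑ j ∈ Finset.range n, ((n : ℂ) - j) * z ^ j := by
      rw [Finset.sum_range_succ]; simp
    have h3 : (z - 1) * ∑ j ∈ Finset.range (n + 1), z ^ j = z ^ (n + 1) - 1 := by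
      rw [mul_comm, geom_sum_mul]
    rw [h1, h2, mul_add, ih, h3, Finset.sum_range_succ]
    push_cast; ring

theorem stmt_4 (b : ℕ) (hb : 3 ≤ b) (z : ℂ)
    (hz : IsRoot (∑ j ∈ Finset.range (b - 1), C ((b : ℂ) - 1 - j) * X ^ j) z) :
    1 < ‖z‖ := by
  set n := b - 1 with hn
  have hn2 : 2 ≤ n := by omega
  have hcast : (b : ℂ) - 1 = (n : ℂ) := by
    have : b = n + 1 := by omega
    rw [this]; push_cast; ring
  have hz' : ∑ j ∈ Finset.range n, ((n : ℂ) - j) * z ^ j = 0 := by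
    have := hz
    simp only [Polynomial.IsRoot, Polynomial.eval_finset_sum, Polynomial.eval_mul,
      Polynomial.eval_C, Polynomial.eval_pow, Polynomial.eval_X, hcast] at this
    exact this
  have hsum : ∑ k ∈ Finset.range n, z ^ (k + 1) = (n : ℂ) := by
    have := key_identity n z
    rw [hz', mul_zero] at this
    linear_combination -this
  by_contra habs
  push_neg at habs
  have hre : ∑ k ∈ Finset.range n, (z ^ (k + 1)).re = (n : ℝ) := by
    have := congrArg Complex.re hsum
    simpa [Complex.re_sum] using this
  have hle : ∀ k ∈ Finset.range n, (z ^ (k + 1)).re ≤ 1 := by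
    intro k _
    refine (Complex.re_le_norm _).trans ?_
    rw [norm_pow]
    exact pow_le_one₀ (norm_nonneg z) habs
  have hre1 : 1 ≤ z.re := by
    by_contra h'
    push_neg at h'
    have hlt : ∑ k ∈ Finset.range n, (z ^ (k + 1)).re
        < ∑ k ∈ Finset.range n, (1 : ℝ) := by
      refine Finset.sum_lt_sum hle ⟨0, Finset.mem_range.mpr (by omega), ?_⟩
      simpa using h'
    rw [hre, Finset.sum_const, Finset.card_range, nsmul_eq_mul, mul_one] at hlt
    exact lt_irrefl _ hlt
  have hreq : z.re = 1 := le_antisymm ((Complex.re_le_norm z).trans habs) hre1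
  have him : z.im = 0 := by
    have hns : Complex.normSq z ≤ 1 := by
      have := Complex.sq_norm z
      nlinarith [norm_nonneg z]
    rw [Complex.normSq_apply, hreq] at hns
    nlinarith
  have hz1 : z = 1 := by
    apply Complex.ext <;> simp [hreq, him]
  rw [hz1] at hz'
  simp only [one_pow, mul_one] at hz'
  have hcast2 : ∑ j ∈ Finset.range n, ((n : ℂ) - j)
      = ((∑ j ∈ Finset.range n, (n - j) : ℕ) : ℂ) := by
    rw [Nat.cast_sum]
    refine Finset.sum_congr rfl fun j hj => ?_
    rw [Nat.cast_sub (le_of_lt (Finset.mem_range.mp hj))]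
  rw [hcast2] at hz'
  have : (∑ j ∈ Finset.range n, (n - j) : ℕ) = 0 := by exact_mod_cast hz'
  have hpos : 0 < (∑ j ∈ Finset.range n, (n - j) : ℕ) := by
    refine lt_of_lt_of_le (show 0 < n - 0 by omega) ?_
    exact Finset.single_le_sum (fun i _ => Nat.zero_le _) (Finset.mem_range.mpr (by omega))
  omega
end

section
/- Let b ≥ 2 be an integer and define q : ℕ → ℚ by q(0) = 1 and, for n ≥ 1, q(n) = (1/(b-1)) · Σ_{d=1}^{min(n, b-1)} q(n-d). Then lim_{n→∞} q(n) = 2/b. -/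
open Finset Filter

noncomputable def myE (b : ℕ) (q : ℕ → ℚ) : ℤ → ℝ :=
  fun z => (if 0 ≤ z then ((q z.toNat : ℚ) : ℝ) else 0) - 2 / (b : ℝ)

noncomputable def myB (b : ℕ) (q : ℕ → ℚ) (hne : (Finset.range (b - 1)).Nonempty) : ℤ → ℝ :=
  fun z => (Finset.range (b - 1)).sup' hne fun j => |myE b q (z - j)|

section Aux

variable (b : ℕ) (q : ℕ → ℚ)

lemma myE_nat (n : ℕ) : myE b q n = ((q n : ℚ) : ℝ) - 2 / b := by
  simp [myE]

lemma myE_neg {z : ℤ} (hz : z < 0) : myE b q z = -(2 / (b : ℝ)) := by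
  simp [myE, not_le.mpr hz]

variable (hb : 2 ≤ b) (hq0 : q 0 = 1)
  (hq : ∀ n, 1 ≤ n →
      q n = (1 / ((b : ℚ) - 1)) * ∑ d ∈ Finset.Icc 1 (min n (b - 1)), q (n - d))

include hb hq in
lemma myq_rec (N : ℕ) (hN : 1 ≤ N) :
    ((b : ℝ) - 1) * ((q N : ℚ) : ℝ)
      = ∑ d ∈ Finset.Icc 1 (min N (b - 1)), ((q (N - d) : ℚ) : ℝ) := by
  have hbQ : ((b : ℚ) - 1) ≠ 0 := by
    have : (2 : ℚ) ≤ (b : ℚ) := by exact_mod_cast hb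
    intro h; nlinarith
  have h2 : ((b : ℚ) - 1) * q N = ∑ d ∈ Finset.Icc 1 (min N (b - 1)), q (N - d) := by
    rw [hq N hN]; field_simp
  exact_mod_cast h2

include hb hq in
lemma myE_rec (n : ℤ) (hn : 1 ≤ n) :
    ((b : ℝ) - 1) * myE b q n = ∑ j ∈ Finset.range (b - 1), myE b q (n - 1 - j) := by
  obtain ⟨N, rfl⟩ : ∃ N : ℕ, n = (N : ℤ) := ⟨n.toNat, (Int.toNat_of_nonneg (by omega)).symm⟩
  have hN : 1 ≤ N := by exact_mod_cast hn
  have hmR : ((b - 1 : ℕ) : ℝ) = (b : ℝ) - 1 := by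
    push_cast [Nat.cast_sub (show 1 ≤ b by omega)]; ring
  have h1 : ∀ j ∈ Finset.range (b - 1), myE b q ((N : ℤ) - 1 - j)
      = (if j + 1 ≤ N then ((q (N - (j + 1)) : ℚ) : ℝ) else 0) - 2 / b := by
    intro j hj
    by_cases hjN : j + 1 ≤ N
    · have hnn : (0 : ℤ) ≤ (N : ℤ) - 1 - j := by omega
      simp only [myE, if_pos hnn, if_pos hjN]
      congr 3
      omega
    · have hneg : ((N : ℤ) - 1 - j) < 0 := by omega
      simp only [myE, if_neg (not_le.mpr hneg), if_neg hjN]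
  rw [Finset.sum_congr rfl h1, Finset.sum_sub_distrib, Finset.sum_const, Finset.card_range,
    nsmul_eq_mul]
  have h2 : ∑ j ∈ Finset.range (b - 1), (if j + 1 ≤ N then ((q (N - (j + 1)) : ℚ) : ℝ) else 0)
      = ∑ d ∈ Finset.Icc 1 (min N (b - 1)), ((q (N - d) : ℚ) : ℝ) := by
    have hA : ∑ d ∈ Finset.Icc 1 (min N (b - 1)), ((q (N - d) : ℚ) : ℝ)
        = ∑ i ∈ Finset.range (min N (b - 1)), ((q (N - (1 + i)) : ℚ) : ℝ) := by
      rw [← Finset.Ico_add_one_right_eq_Icc, Finset.sum_Ico_eq_sum_range]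
      congr 1
    have hB : ∑ j ∈ Finset.range (b - 1), (if j + 1 ≤ N then ((q (N - (j + 1)) : ℚ) : ℝ) else 0)
        = ∑ j ∈ Finset.range (min N (b - 1)), (if j + 1 ≤ N then ((q (N - (j + 1)) : ℚ) : ℝ) else 0) := by
      symm
      apply Finset.sum_subset (Finset.range_subset_range.mpr (min_le_right N (b - 1)))
      intro j hj hj2
      have h3 : ¬ (j + 1 ≤ N) := by
        have := Finset.mem_range.mp hj
        have h4 : ¬ j < min N (b - 1) := fun h => hj2 (Finset.mem_range.mpr h)
        omega
      rw [if_neg h3]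
    rw [hA, hB]
    apply Finset.sum_congr rfl
    intro j hj
    have hjN : j + 1 ≤ N := by
      have := Finset.mem_range.mp hj; omega
    rw [if_pos hjN]
    congr 2
    omega
  rw [h2, ← myq_rec b q hb hq N hN]
  rw [myE_nat, hmR]
  ring

include hb hq0 hq in
lemma myE_inv (n : ℤ) (hn : 0 ≤ n) :
    ∑ j ∈ Finset.range (b - 1), (((b : ℝ) - 1) - j) * myE b q (n - j) = 0 := by
  have hbR : (2 : ℝ) ≤ (b : ℝ) := by exact_mod_cast hb
  have hb0 : (b : ℝ) ≠ 0 := by linarith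
  have hmR : ((b - 1 : ℕ) : ℝ) = (b : ℝ) - 1 := by
    push_cast [Nat.cast_sub (show 1 ≤ b by omega)]; ring
  refine Int.le_induction (motive := fun n _ => ∑ j ∈ Finset.range (b - 1), (((b : ℝ) - 1) - j) * myE b q (n - j) = 0) ?_ ?_ n hn
  · -- base case
    show ∑ j ∈ Finset.range (b - 1), (((b : ℝ) - 1) - j) * myE b q ((0:ℤ) - j) = 0
    have h1 : ∀ j ∈ Finset.range (b - 1), (((b : ℝ) - 1) - j) * myE b q (0 - j)
        = (((b : ℝ) - 1) - j) * (-(2 / b)) + (if j = 0 then ((b : ℝ) - 1) * 1 else 0) := by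
      intro j hj
      rcases Nat.eq_zero_or_pos j with h | h
      · subst h
        have h0' : myE b q 0 = 1 - 2 / b := by simpa [hq0] using myE_nat b q 0
        rw [show (0:ℤ) - ((0:ℕ):ℤ) = (0:ℤ) by simp, h0', if_pos rfl]
        push_cast
        ring
      · have : myE b q (0 - j) = -(2 / b) := myE_neg b q (by omega)
        rw [this, if_neg (by omega)]
        ring
    rw [Finset.sum_congr rfl h1, Finset.sum_add_distrib]
    rw [Finset.sum_ite_eq' (Finset.range (b - 1)) 0 (fun _ => ((b : ℝ) - 1) * 1)]
    rw [if_pos (Finset.mem_range.mpr (by omega))]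
    rw [← Finset.sum_mul]
    have hGauss : ∑ j ∈ Finset.range (b - 1), (((b : ℝ) - 1) - j) = ((b : ℝ) - 1) * b / 2 := by
      have h2 : ((∑ j ∈ Finset.range (b - 1), j : ℕ) : ℝ) * 2 = ((b : ℝ) - 1) * ((b : ℝ) - 2) := by
        have h3 := Finset.sum_range_id_mul_two (b - 1)
        have h4 : (((∑ j ∈ Finset.range (b - 1), j) * 2 : ℕ) : ℝ) = (((b - 1) * (b - 1 - 1) : ℕ) : ℝ) := by
          exact_mod_cast congrArg (fun x : ℕ => (x : ℝ)) h3
        push_cast [Nat.cast_sub (show 1 ≤ b by omega), Nat.cast_sub (show 1 ≤ b - 1 by omega)] at h4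
        push_cast
        linarith
      rw [Finset.sum_sub_distrib, Finset.sum_const, Finset.card_range, nsmul_eq_mul, hmR]
      have h5 : ∑ j ∈ Finset.range (b - 1), (j : ℝ) = ((b : ℝ) - 1) * ((b : ℝ) - 2) / 2 := by
        push_cast at h2 ⊢
        linarith
      rw [h5]; ring
    rw [hGauss]
    field_simp
    ring
  · -- inductive step
    intro n hn ih
    replace ih : ∑ j ∈ Finset.range (b - 1), (((b : ℝ) - 1) - j) * myE b q (n - j) = 0 := ih
    show ∑ j ∈ Finset.range (b - 1), (((b : ℝ) - 1) - j) * myE b q (n + 1 - j) = 0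
    have e1 : Finset.range (b - 1) = Finset.range ((b - 2) + 1) := by
      congr 1; omega
    rw [e1, Finset.sum_range_succ']
    have h1 : ∀ i ∈ Finset.range (b - 2),
        (((b : ℝ) - 1) - ((i + 1 : ℕ) : ℝ)) * myE b q (n + 1 - ((i + 1 : ℕ) : ℤ))
        = (((b : ℝ) - 1) - 1 - i) * myE b q (n - i) := by
      intro i hi
      have hidx : (n + 1 - ((i + 1 : ℕ) : ℤ)) = n - i := by push_cast; ring
      rw [hidx]
      push_cast
      ring
    rw [Finset.sum_congr rfl h1]
    have hrec : ((b : ℝ) - 1) * myE b q (n + 1) = ∑ j ∈ Finset.range (b - 1), myE b q (n - j) := by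
      have h2 := myE_rec b q hb hq (n + 1) (by omega)
      have h3 : ∀ j ∈ Finset.range (b - 1), myE b q (n + 1 - 1 - j) = myE b q (n - j) := by
        intro j hj; congr 1; ring
      rw [h2, Finset.sum_congr rfl h3]
    have h4 : (((b : ℝ) - 1) - ((0 : ℕ) : ℝ)) * myE b q (n + 1 - ((0 : ℕ) : ℤ))
        = ((b : ℝ) - 1) * myE b q (n + 1) := by norm_num
    rw [h4, hrec]
    have h5 : ∑ i ∈ Finset.range (b - 2), (((b : ℝ) - 1) - 1 - i) * myE b q (n - i)
        = ∑ i ∈ Finset.range (b - 1), (((b : ℝ) - 1) - 1 - i) * myE b q (n - i) := by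
      rw [e1, Finset.sum_range_succ]
      have : (((b : ℝ) - 1) - 1 - ((b - 2 : ℕ) : ℝ)) = 0 := by
        push_cast [Nat.cast_sub (show 2 ≤ b by omega)]; ring
      rw [this]; ring
    rw [h5, ← Finset.sum_add_distrib]
    rw [← ih]
    apply Finset.sum_congr rfl
    intro j hj
    ring

include hb hq0 hq in
lemma myE_sign_nonpos (n : ℤ) (hn : 0 ≤ n) :
    ∃ j ∈ Finset.range (b - 1), myE b q (n - j) ≤ 0 := by
  have hmR : ((b - 1 : ℕ) : ℝ) = (b : ℝ) - 1 := by
    push_cast [Nat.cast_sub (show 1 ≤ b by omega)]; ring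
  have hcoef : ∀ j ∈ Finset.range (b - 1), (0 : ℝ) < ((b : ℝ) - 1) - j := by
    intro j hj
    have h := Finset.mem_range.mp hj
    have h2 : (j : ℝ) < ((b - 1 : ℕ) : ℝ) := by exact_mod_cast h
    rw [hmR] at h2; linarith
  by_contra h
  push_neg at h
  have hpos := Finset.sum_pos
    (fun j hj => mul_pos (hcoef j hj) (h j hj))
    (Finset.nonempty_range_iff.mpr (show b - 1 ≠ 0 by omega))
  rw [myE_inv b q hb hq0 hq n hn] at hpos
  exact lt_irrefl 0 hpos

include hb hq0 hq in
lemma myE_sign_nonneg (n : ℤ) (hn : 0 ≤ n) :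
    ∃ j ∈ Finset.range (b - 1), 0 ≤ myE b q (n - j) := by
  have hmR : ((b - 1 : ℕ) : ℝ) = (b : ℝ) - 1 := by
    push_cast [Nat.cast_sub (show 1 ≤ b by omega)]; ring
  have hcoef : ∀ j ∈ Finset.range (b - 1), (0 : ℝ) < ((b : ℝ) - 1) - j := by
    intro j hj
    have h := Finset.mem_range.mp hj
    have h2 : (j : ℝ) < ((b - 1 : ℕ) : ℝ) := by exact_mod_cast h
    rw [hmR] at h2; linarith
  by_contra h
  push_neg at h
  have hpos := Finset.sum_pos
    (fun j hj => mul_pos (hcoef j hj) (neg_pos.mpr (h j hj)))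
    (Finset.nonempty_range_iff.mpr (show b - 1 ≠ 0 by omega))
  have heq : ∑ j ∈ Finset.range (b - 1), (((b : ℝ) - 1) - j) * (-(myE b q (n - j))) = 0 := by
    have h2 : ∑ j ∈ Finset.range (b - 1), (((b : ℝ) - 1) - j) * (-(myE b q (n - j)))
        = -∑ j ∈ Finset.range (b - 1), (((b : ℝ) - 1) - j) * myE b q (n - j) := by
      rw [← Finset.sum_neg_distrib]
      apply Finset.sum_congr rfl
      intro j hj; ring
    rw [h2, myE_inv b q hb hq0 hq n hn, neg_zero]
  rw [heq] at hpos
  exact lt_irrefl 0 hpos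

end Aux

theorem stmt_8 (b : ℕ) (hb : 2 ≤ b) (q : ℕ → ℚ) (hq0 : q 0 = 1)
    (hq : ∀ n, 1 ≤ n →
      q n = (1 / ((b : ℚ) - 1)) * ∑ d ∈ Finset.Icc 1 (min n (b - 1)), q (n - d)) :
    Filter.Tendsto (fun n => (q n : ℝ)) Filter.atTop (nhds (2 / (b : ℝ))) := by
  have hbR : (2 : ℝ) ≤ (b : ℝ) := by exact_mod_cast hb
  have hmR : ((b - 1 : ℕ) : ℝ) = (b : ℝ) - 1 := by
    push_cast [Nat.cast_sub (show 1 ≤ b by omega)]; ring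
  have hmpos : (0 : ℝ) < (b : ℝ) - 1 := by linarith
  have hne : (Finset.range (b - 1)).Nonempty :=
    Finset.nonempty_range_iff.mpr (show b - 1 ≠ 0 by omega)
  set E := myE b q with hE
  set B : ℤ → ℝ := myB b q hne with hB
  have hBle : ∀ (z : ℤ) (j : ℕ), j ∈ Finset.range (b - 1) → |E (z - j)| ≤ B z := by
    intro z j hj
    rw [hB, hE]
    show |myE b q (z - j)| ≤ (Finset.range (b - 1)).sup' hne (fun j => |myE b q (z - j)|)
    exact Finset.le_sup' (fun j : ℕ => |myE b q (z - j)|) hj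
  have hBup : ∀ (z : ℤ) (x : ℝ), (∀ j ∈ Finset.range (b - 1), |E (z - j)| ≤ x) → B z ≤ x := by
    intro z x h
    rw [hB]
    show (Finset.range (b - 1)).sup' hne (fun j => |myE b q (z - j)|) ≤ x
    apply Finset.sup'_le
    intro j hj
    rw [← hE]
    exact h j hj
  have h0mem : (0 : ℕ) ∈ Finset.range (b - 1) := Finset.mem_range.mpr (by omega)
  have hBabs : ∀ z : ℤ, |E z| ≤ B z := by
    intro z
    simpa using hBle z 0 h0mem
  have hB0 : ∀ z : ℤ, 0 ≤ B z := fun z => le_trans (abs_nonneg _) (hBabs z)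
  set r : ℝ := ((b : ℝ) - 2) / ((b : ℝ) - 1) with hr
  have hr0 : 0 ≤ r := div_nonneg (by linarith) (by linarith)
  have hr1 : r < 1 := (div_lt_one hmpos).mpr (by linarith)
  -- key contraction estimate
  have key : ∀ n : ℤ, 0 ≤ n → |E (n + 1)| ≤ r * B n := by
    intro n hn
    obtain ⟨j0, hj0m, hj0⟩ := myE_sign_nonpos b q hb hq0 hq n hn
    obtain ⟨j1, hj1m, hj1⟩ := myE_sign_nonneg b q hb hq0 hq n hn
    have hrec : ((b : ℝ) - 1) * E (n + 1) = ∑ j ∈ Finset.range (b - 1), E (n - j) := by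
      rw [hE, myE_rec b q hb hq (n + 1) (by omega)]
      apply Finset.sum_congr rfl
      intro j hj
      congr 1
      ring
    have hcard : ∀ j : ℕ, j ∈ Finset.range (b - 1) →
        ((((Finset.range (b - 1)).erase j).card : ℕ) : ℝ) = (b : ℝ) - 2 := by
      intro j hj
      rw [Finset.card_erase_of_mem hj, Finset.card_range]
      push_cast [Nat.cast_sub (show 1 ≤ b - 1 by omega), Nat.cast_sub (show 1 ≤ b by omega)]
      ring
    have hup : ∑ j ∈ Finset.range (b - 1), E (n - j) ≤ ((b : ℝ) - 2) * B n := by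
      rw [← Finset.add_sum_erase _ _ hj0m]
      have h1 : ∑ j ∈ (Finset.range (b - 1)).erase j0, E (n - j) ≤ ((b : ℝ) - 2) * B n := by
        calc ∑ j ∈ (Finset.range (b - 1)).erase j0, E (n - j)
            ≤ ∑ _j ∈ (Finset.range (b - 1)).erase j0, B n :=
              Finset.sum_le_sum
                (fun j hj => le_trans (le_abs_self _) (hBle n j (Finset.mem_of_mem_erase hj)))
          _ = ((b : ℝ) - 2) * B n := by
              rw [Finset.sum_const, nsmul_eq_mul, hcard j0 hj0m]
      linarith
    have hlo : -(((b : ℝ) - 2) * B n) ≤ ∑ j ∈ Finset.range (b - 1), E (n - j) := by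
      rw [← Finset.add_sum_erase _ _ hj1m]
      have h1 : -(((b : ℝ) - 2) * B n) ≤ ∑ j ∈ (Finset.range (b - 1)).erase j1, E (n - j) := by
        calc -(((b : ℝ) - 2) * B n)
            = ∑ _j ∈ (Finset.range (b - 1)).erase j1, -(B n) := by
              rw [Finset.sum_const, nsmul_eq_mul, hcard j1 hj1m]; ring
          _ ≤ ∑ j ∈ (Finset.range (b - 1)).erase j1, E (n - j) :=
              Finset.sum_le_sum (fun j hj => le_trans
                (neg_le_neg (hBle n j (Finset.mem_of_mem_erase hj))) (neg_abs_le _))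
      linarith
    have habs : |((b : ℝ) - 1) * E (n + 1)| ≤ ((b : ℝ) - 2) * B n := by
      rw [hrec]
      exact abs_le.mpr ⟨hlo, hup⟩
    rw [abs_mul, abs_of_pos hmpos] at habs
    rw [hr, div_mul_eq_mul_div, le_div_iff₀ hmpos]
    calc |E (n + 1)| * ((b : ℝ) - 1) = ((b : ℝ) - 1) * |E (n + 1)| := mul_comm _ _
      _ ≤ ((b : ℝ) - 2) * B n := habs
  -- B is non-increasing (on nonnegatives)
  have hBstep : ∀ n : ℤ, 0 ≤ n → B (n + 1) ≤ B n := by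
    intro n hn
    refine hBup (n + 1) (B n) ?_
    intro j hj
    rcases Nat.eq_zero_or_pos j with h | h
    · subst h
      rw [show (n + 1 - ((0 : ℕ) : ℤ)) = n + 1 by simp]
      calc |E (n + 1)| ≤ r * B n := key n hn
        _ ≤ 1 * B n := mul_le_mul_of_nonneg_right hr1.le (hB0 n)
        _ = B n := one_mul _
    · obtain ⟨k, rfl⟩ : ∃ k, j = k + 1 := ⟨j - 1, by omega⟩
      rw [show (n + 1 - ((k + 1 : ℕ) : ℤ)) = n - k by push_cast; ring]
      exact hBle n k (Finset.mem_range.mpr (by have := Finset.mem_range.mp hj; omega))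
  have hmono : ∀ n : ℤ, 0 ≤ n → ∀ n' : ℤ, n ≤ n' → B n' ≤ B n := by
    intro n hn n' hn'
    refine Int.le_induction (motive := fun z _ => B z ≤ B n) ?_ ?_ n' hn'
    · exact le_refl _
    · intro k hk ihk
      replace ihk : B k ≤ B n := ihk
      show B (k + 1) ≤ B n
      exact le_trans (hBstep k (le_trans hn hk)) ihk
  have hgeom : ∀ n : ℤ, 0 ≤ n → B (n + ((b - 1 : ℕ) : ℤ)) ≤ r * B n := by
    intro n hn
    refine hBup (n + ((b - 1 : ℕ) : ℤ)) (r * B n) ?_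
    intro j hj
    have hjm : (j : ℤ) < ((b - 1 : ℕ) : ℤ) := by exact_mod_cast Finset.mem_range.mp hj
    rw [show n + ((b - 1 : ℕ) : ℤ) - j = (n + (((b - 1 : ℕ) : ℤ) - j - 1)) + 1 by ring]
    calc |E ((n + (((b - 1 : ℕ) : ℤ) - j - 1)) + 1)|
        ≤ r * B (n + (((b - 1 : ℕ) : ℤ) - j - 1)) := key _ (by omega)
      _ ≤ r * B n := mul_le_mul_of_nonneg_left (hmono n hn _ (by omega)) hr0
  have hiter : ∀ k : ℕ, B ((k * (b - 1) : ℕ) : ℤ) ≤ r ^ k * B 0 := by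
    intro k
    induction k with
    | zero => simpa using le_refl (B 0)
    | succ k ih =>
      rw [show (((k + 1) * (b - 1) : ℕ) : ℤ) = ((k * (b - 1) : ℕ) : ℤ) + ((b - 1 : ℕ) : ℤ) by
        push_cast; ring]
      calc B (((k * (b - 1) : ℕ) : ℤ) + ((b - 1 : ℕ) : ℤ))
          ≤ r * B ((k * (b - 1) : ℕ) : ℤ) := hgeom _ (by positivity)
        _ ≤ r * (r ^ k * B 0) := mul_le_mul_of_nonneg_left ih hr0
        _ = r ^ (k + 1) * B 0 := by ring
  have hfin : ∀ n : ℕ, |((q n : ℚ) : ℝ) - 2 / b| ≤ r ^ (n / (b - 1)) * B 0 := by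
    intro n
    have h1 : |E (n : ℤ)| ≤ B (n : ℤ) := hBabs _
    have h2 : B (n : ℤ) ≤ B (((n / (b - 1)) * (b - 1) : ℕ) : ℤ) := by
      apply hmono _ (by positivity)
      exact_mod_cast Nat.div_mul_le_self n (b - 1)
    have h3 := hiter (n / (b - 1))
    rw [hE, myE_nat] at h1
    linarith
  rw [tendsto_iff_norm_sub_tendsto_zero]
  have hdiv : Filter.Tendsto (fun n : ℕ => n / (b - 1)) Filter.atTop Filter.atTop := by
    apply Filter.tendsto_atTop_atTop.mpr
    intro K
    exact ⟨K * (b - 1), fun n hn => (Nat.le_div_iff_mul_le (by omega)).mpr hn⟩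
  have hpow : Filter.Tendsto (fun n : ℕ => r ^ (n / (b - 1))) Filter.atTop (nhds 0) :=
    (tendsto_pow_atTop_nhds_zero_of_lt_one hr0 hr1).comp hdiv
  have hg : Filter.Tendsto (fun n : ℕ => r ^ (n / (b - 1)) * B 0) Filter.atTop (nhds 0) := by
    simpa using hpow.mul_const (B 0)
  apply squeeze_zero (fun n => norm_nonneg _) _ hg
  intro n
  simpa [Real.norm_eq_abs] using hfin n
end

section
/- Let b ≥ 2 be an integer and define q : ℕ → ℚ by q(0) = 1 and, for n ≥ 1, q(n) = (1/(b-1)) · Σ_{d=1}^{min(n, b-1)} q(n-d). Then there exist constants C > 0 and α with 0 < α < 1 such that |q(n) - 2/b| ≤ C·α^n for all n ∈ ℕ. -/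
namespace Stmt9
open Finset

variable {B : ℕ} {q : ℕ → ℚ}

abbrev Mw (q : ℕ → ℚ) (hB : B ≠ 0) (n : ℕ) : ℚ :=
  (range B).sup' (nonempty_range_iff.mpr hB) fun i => q (n + i)

abbrev mw (q : ℕ → ℚ) (hB : B ≠ 0) (n : ℕ) : ℚ :=
  (range B).inf' (nonempty_range_iff.mpr hB) fun i => q (n + i)

theorem le_Mw (q : ℕ → ℚ) (hB : B ≠ 0) (n : ℕ) : ∀ i, i < B → q (n + i) ≤ Mw q hB n :=
  fun _i hi => by
  unfold Mw
  exact le_sup' (fun i => q (n + i)) (mem_range.mpr hi)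

theorem mw_le (q : ℕ → ℚ) (hB : B ≠ 0) (n : ℕ) : ∀ i, i < B → mw q hB n ≤ q (n + i) :=
  fun _i hi => by
  unfold mw
  exact inf'_le (fun i => q (n + i)) (mem_range.mpr hi)

theorem window_bounds (hrec : ∀ n, (B:ℚ) * q (n + B) = ∑ i ∈ range B, q (n + i))
    (hB : B ≠ 0) (n : ℕ) : ∀ k, n ≤ k → mw q hB n ≤ q k ∧ q k ≤ Mw q hB n := by
  intro k
  induction k using Nat.strong_induction_on with
  | _ k ih =>
    intro hk
    rcases lt_or_ge k (n + B) with h | h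
    · obtain ⟨i, hi, rfl⟩ : ∃ i, i < B ∧ k = n + i := ⟨k - n, by omega, by omega⟩
      exact ⟨mw_le q hB n i hi, le_Mw q hB n i hi⟩
    · obtain ⟨m, rfl⟩ : ∃ m, k = m + B := ⟨k - B, by omega⟩
      have hBpos : (0:ℚ) < (B:ℚ) := by exact_mod_cast Nat.pos_of_ne_zero hB
      have hrm := hrec m
      constructor
      · have h1 : (B:ℚ) * mw q hB n ≤ (B:ℚ) * q (m + B) := by
          rw [hrm]
          calc (B:ℚ) * mw q hB n = ∑ _i ∈ range B, mw q hB n := by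
                rw [Finset.sum_const, card_range, nsmul_eq_mul]
            _ ≤ ∑ i ∈ range B, q (m + i) := by
                refine Finset.sum_le_sum fun i hi => ?_
                rw [mem_range] at hi
                exact (ih (m + i) (by omega) (by omega)).1
        exact le_of_mul_le_mul_left h1 hBpos
      · have h1 : (B:ℚ) * q (m + B) ≤ (B:ℚ) * Mw q hB n := by
          rw [hrm]
          calc ∑ i ∈ range B, q (m + i) ≤ ∑ _i ∈ range B, Mw q hB n := by
                refine Finset.sum_le_sum fun i hi => ?_
                rw [mem_range] at hi
                exact (ih (m + i) (by omega) (by omega)).2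
            _ = (B:ℚ) * Mw q hB n := by
                rw [Finset.sum_const, card_range, nsmul_eq_mul]
        exact le_of_mul_le_mul_left h1 hBpos


theorem lb_aux (hrec : ∀ n, (B:ℚ) * q (n + B) = ∑ i ∈ range B, q (n + i))
    (hB : B ≠ 0) (n : ℕ) :
    ∀ t, Mw q hB n - mw q hB n ≤ (B:ℚ)^(t+1) * (q (n + B + t) - mw q hB n) := by
  have hBpos : (0:ℚ) < (B:ℚ) := by exact_mod_cast Nat.pos_of_ne_zero hB
  have hall := window_bounds hrec hB n
  intro t
  induction t with
  | zero =>
    obtain ⟨i0, hi0, hM⟩ := Finset.exists_mem_eq_sup'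
      (nonempty_range_iff.mpr hB) (fun i => q (n + i))
    rw [mem_range] at hi0
    have hsplit : ∑ i ∈ range B, q (n + i)
        = ∑ i ∈ (range B).erase i0, q (n + i) + q (n + i0) :=
      (Finset.sum_erase_add _ _ (mem_range.mpr hi0)).symm
    have hlo : ((B - 1 : ℕ):ℚ) * mw q hB n ≤ ∑ i ∈ (range B).erase i0, q (n + i) := by
      have := Finset.card_nsmul_le_sum ((range B).erase i0) (fun i => q (n + i)) (mw q hB n)
        (fun i hi => mw_le q hB n i (mem_range.mp (mem_of_mem_erase hi)))
      rwa [card_erase_of_mem (mem_range.mpr hi0), card_range, nsmul_eq_mul] at this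
    have hrn := hrec n
    have hc : ((B - 1 : ℕ):ℚ) = (B:ℚ) - 1 := by
      have : 1 ≤ B := Nat.pos_of_ne_zero hB
      push_cast [this]; ring
    rw [hc] at hlo
    have hM' : Mw q hB n = q (n + i0) := hM
    have hmM : mw q hB n ≤ Mw q hB n := le_trans (mw_le q hB n 0 (Nat.pos_of_ne_zero hB))
      (le_Mw q hB n 0 (Nat.pos_of_ne_zero hB))
    have : (B:ℚ) - 1 ≤ (B:ℚ) := by linarith
    rw [pow_one, Nat.add_zero]
    nlinarith [hrn, hsplit, hlo, hM']
  | succ t ih =>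
    have hrn := hrec (n + t + 1)
    have hBm : 1 ≤ B := Nat.pos_of_ne_zero hB
    have hsplit : ∑ i ∈ range B, q (n + t + 1 + i)
        = ∑ i ∈ range (B-1), q (n + t + 1 + i) + q (n + B + t) := by
      have h1 : B = (B - 1) + 1 := by omega
      rw [h1, Finset.sum_range_succ]
      congr 2
      omega
    have hlo : ((B - 1 : ℕ):ℚ) * mw q hB n ≤ ∑ i ∈ range (B-1), q (n + t + 1 + i) := by
      have := Finset.card_nsmul_le_sum (range (B-1)) (fun i => q (n + t + 1 + i)) (mw q hB n)
        (fun i _hi => (hall (n + t + 1 + i) (by omega)).1)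
      rwa [card_range, nsmul_eq_mul] at this
    have hc : ((B - 1 : ℕ):ℚ) = (B:ℚ) - 1 := by push_cast [hBm]; ring
    rw [hc] at hlo
    have hidx : n + t + 1 + B = n + B + (t + 1) := by omega
    rw [hidx] at hrn
    have hq0 : mw q hB n ≤ q (n + B + t) := (hall (n + B + t) (by omega)).1
    have hBpow : (0:ℚ) < (B:ℚ)^(t+1) := by positivity
    calc Mw q hB n - mw q hB n ≤ (B:ℚ)^(t+1) * (q (n + B + t) - mw q hB n) := ih
      _ ≤ (B:ℚ)^(t+1) * ((B:ℚ) * (q (n + B + (t+1)) - mw q hB n)) := by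
          have : q (n + B + t) - mw q hB n ≤ (B:ℚ) * (q (n + B + (t+1)) - mw q hB n) := by
            nlinarith [hrn, hsplit, hlo]
          exact mul_le_mul_of_nonneg_left this (le_of_lt hBpow)
      _ = (B:ℚ)^(t+1+1) * (q (n + B + (t+1)) - mw q hB n) := by ring

theorem ub_aux (hrec : ∀ n, (B:ℚ) * q (n + B) = ∑ i ∈ range B, q (n + i))
    (hB : B ≠ 0) (n : ℕ) :
    ∀ t, Mw q hB n - mw q hB n ≤ (B:ℚ)^(t+1) * (Mw q hB n - q (n + B + t)) := by
  have hBpos : (0:ℚ) < (B:ℚ) := by exact_mod_cast Nat.pos_of_ne_zero hB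
  have hall := window_bounds hrec hB n
  intro t
  induction t with
  | zero =>
    obtain ⟨i0, hi0, hM⟩ := Finset.exists_mem_eq_inf'
      (nonempty_range_iff.mpr hB) (fun i => q (n + i))
    rw [mem_range] at hi0
    have hsplit : ∑ i ∈ range B, q (n + i)
        = ∑ i ∈ (range B).erase i0, q (n + i) + q (n + i0) :=
      (Finset.sum_erase_add _ _ (mem_range.mpr hi0)).symm
    have hlo : ∑ i ∈ (range B).erase i0, q (n + i) ≤ ((B - 1 : ℕ):ℚ) * Mw q hB n := by
      have := Finset.sum_le_card_nsmul ((range B).erase i0) (fun i => q (n + i)) (Mw q hB n)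
        (fun i hi => le_Mw q hB n i (mem_range.mp (mem_of_mem_erase hi)))
      rwa [card_erase_of_mem (mem_range.mpr hi0), card_range, nsmul_eq_mul] at this
    have hrn := hrec n
    have hc : ((B - 1 : ℕ):ℚ) = (B:ℚ) - 1 := by
      have : 1 ≤ B := Nat.pos_of_ne_zero hB
      push_cast [this]; ring
    rw [hc] at hlo
    have hM' : mw q hB n = q (n + i0) := hM
    have hmM : mw q hB n ≤ Mw q hB n := le_trans (mw_le q hB n 0 (Nat.pos_of_ne_zero hB))
      (le_Mw q hB n 0 (Nat.pos_of_ne_zero hB))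
    rw [pow_one, Nat.add_zero]
    nlinarith [hrn, hsplit, hlo, hM']
  | succ t ih =>
    have hrn := hrec (n + t + 1)
    have hBm : 1 ≤ B := Nat.pos_of_ne_zero hB
    have hsplit : ∑ i ∈ range B, q (n + t + 1 + i)
        = ∑ i ∈ range (B-1), q (n + t + 1 + i) + q (n + B + t) := by
      have h1 : B = (B - 1) + 1 := by omega
      rw [h1, Finset.sum_range_succ]
      congr 2
      omega
    have hlo : ∑ i ∈ range (B-1), q (n + t + 1 + i) ≤ ((B - 1 : ℕ):ℚ) * Mw q hB n := by
      have := Finset.sum_le_card_nsmul (range (B-1)) (fun i => q (n + t + 1 + i)) (Mw q hB n)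
        (fun i _hi => (hall (n + t + 1 + i) (by omega)).2)
      rwa [card_range, nsmul_eq_mul] at this
    have hc : ((B - 1 : ℕ):ℚ) = (B:ℚ) - 1 := by push_cast [hBm]; ring
    rw [hc] at hlo
    have hidx : n + t + 1 + B = n + B + (t + 1) := by omega
    rw [hidx] at hrn
    have hBpow : (0:ℚ) < (B:ℚ)^(t+1) := by positivity
    calc Mw q hB n - mw q hB n ≤ (B:ℚ)^(t+1) * (Mw q hB n - q (n + B + t)) := ih
      _ ≤ (B:ℚ)^(t+1) * ((B:ℚ) * (Mw q hB n - q (n + B + (t+1)))) := by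
          have : Mw q hB n - q (n + B + t) ≤ (B:ℚ) * (Mw q hB n - q (n + B + (t+1))) := by
            nlinarith [hrn, hsplit, hlo]
          exact mul_le_mul_of_nonneg_left this (le_of_lt hBpow)
      _ = (B:ℚ)^(t+1+1) * (Mw q hB n - q (n + B + (t+1))) := by ring


theorem osc_contract (hrec : ∀ n, (B:ℚ) * q (n + B) = ∑ i ∈ range B, q (n + i))
    (hB : B ≠ 0) (n : ℕ) :
    Mw q hB (n + B) - mw q hB (n + B) ≤
      (1 - 2/(B:ℚ)^B) * (Mw q hB n - mw q hB n) := by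
  have hBpos : (0:ℚ) < (B:ℚ) := by exact_mod_cast Nat.pos_of_ne_zero hB
  have hP : (0:ℚ) < (B:ℚ)^B := by positivity
  have hall := window_bounds hrec hB n
  set M := Mw q hB n with hMdef
  set m := mw q hB n with hmdef
  have key : ∀ i, i < B →
      m + (M - m)/(B:ℚ)^B ≤ q (n + B + i) ∧ q (n + B + i) ≤ M - (M - m)/(B:ℚ)^B := by
    intro i hi
    have hlb := lb_aux hrec hB n i
    have hub := ub_aux hrec hB n i
    have hpow : (B:ℚ)^(i+1) ≤ (B:ℚ)^B := by
      apply pow_le_pow_right₀ (by exact_mod_cast Nat.pos_of_ne_zero hB) (by omega)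
    have h1 : m ≤ q (n + B + i) := (hall (n + B + i) (by omega)).1
    have h2 : q (n + B + i) ≤ M := (hall (n + B + i) (by omega)).2
    constructor
    · have : M - m ≤ (B:ℚ)^B * (q (n + B + i) - m) := by
        calc M - m ≤ (B:ℚ)^(i+1) * (q (n + B + i) - m) := hlb
          _ ≤ (B:ℚ)^B * (q (n + B + i) - m) :=
            mul_le_mul_of_nonneg_right hpow (by linarith)
      have := (div_le_iff₀ hP).mpr (by linarith [this] : M - m ≤ (q (n + B + i) - m) * (B:ℚ)^B)
      linarith
    · have : M - m ≤ (B:ℚ)^B * (M - q (n + B + i)) := by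
        calc M - m ≤ (B:ℚ)^(i+1) * (M - q (n + B + i)) := hub
          _ ≤ (B:ℚ)^B * (M - q (n + B + i)) :=
            mul_le_mul_of_nonneg_right hpow (by linarith)
      have := (div_le_iff₀ hP).mpr (by linarith [this] : M - m ≤ (M - q (n + B + i)) * (B:ℚ)^B)
      linarith
  have hMup : Mw q hB (n + B) ≤ M - (M - m)/(B:ℚ)^B := by
    apply Finset.sup'_le
    intro i hi
    exact (key i (mem_range.mp hi)).2
  have hmlo : m + (M - m)/(B:ℚ)^B ≤ mw q hB (n + B) := by
    apply Finset.le_inf'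
    intro i hi
    exact (key i (mem_range.mp hi)).1
  have : (1 - 2/(B:ℚ)^B) * (M - m) = (M - (M - m)/(B:ℚ)^B) - (m + (M - m)/(B:ℚ)^B) := by
    field_simp
    ring
  rw [this]
  linarith

theorem osc_decay (hrec : ∀ n, (B:ℚ) * q (n + B) = ∑ i ∈ range B, q (n + i))
    (hB : B ≠ 0) (hr0 : 0 ≤ 1 - 2/(B:ℚ)^B) :
    ∀ t, Mw q hB (t * B) - mw q hB (t * B) ≤
      (1 - 2/(B:ℚ)^B)^t * (Mw q hB 0 - mw q hB 0) := by
  intro t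
  induction t with
  | zero => simp
  | succ t ih =>
    have h1 : (t + 1) * B = t * B + B := by ring
    rw [h1]
    calc Mw q hB (t * B + B) - mw q hB (t * B + B)
        ≤ (1 - 2/(B:ℚ)^B) * (Mw q hB (t * B) - mw q hB (t * B)) := osc_contract hrec hB _
      _ ≤ (1 - 2/(B:ℚ)^B) * ((1 - 2/(B:ℚ)^B)^t * (Mw q hB 0 - mw q hB 0)) :=
          mul_le_mul_of_nonneg_left ih hr0
      _ = (1 - 2/(B:ℚ)^B)^(t+1) * (Mw q hB 0 - mw q hB 0) := by ring


theorem invariant (hrec : ∀ n, (B:ℚ) * q (n + B) = ∑ i ∈ range B, q (n + i))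
    (hL0 : ∑ j ∈ range B, ((j:ℚ)+1) * q j = B) :
    ∀ n, ∑ j ∈ range B, ((j:ℚ)+1) * q (n + j) = B := by
  intro n
  induction n with
  | zero => simpa using hL0
  | succ n ih =>
    have e1 : ∑ j ∈ range B, ((j:ℚ)+1) * q (n + 1 + j)
        = ∑ j ∈ range (B+1), (j:ℚ) * q (n + j) := by
      rw [Finset.sum_range_succ' (fun j => ((j:ℚ)) * q (n + j)) B]
      push_cast
      rw [add_zero, zero_mul, add_zero]
      refine Finset.sum_congr rfl fun j _hj => ?_
      have : n + 1 + j = n + (j + 1) := by omega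
      rw [this]
    have e2 : ∑ j ∈ range (B+1), (j:ℚ) * q (n + j)
        = ∑ j ∈ range B, (j:ℚ) * q (n + j) + (B:ℚ) * q (n + B) := by
      rw [Finset.sum_range_succ]
    have e3 : ∑ j ∈ range B, ((j:ℚ)+1) * q (n + j)
        = ∑ j ∈ range B, (j:ℚ) * q (n + j) + ∑ j ∈ range B, q (n + j) := by
      rw [← Finset.sum_add_distrib]
      refine Finset.sum_congr rfl fun j _hj => ?_
      ring
    rw [e1, e2, hrec n]
    linarith [ih, e3]

theorem base_invariant (hq0 : q 0 = 1) (hB : B ≠ 0)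
    (hsmall : ∀ j, 1 ≤ j → j ≤ B → (B:ℚ) * q j = ∑ k ∈ range j, q k) :
    ∑ j ∈ range B, ((j:ℚ)+1) * q j = B := by
  have hB1 : 1 ≤ B := Nat.pos_of_ne_zero hB
  have aux : ∀ j, j < B →
      ∑ k ∈ range (j+1), ((k:ℚ)+1) * q k
        + ((B - (j+1):ℕ):ℚ) * ∑ k ∈ range (j+1), q k = B := by
    intro j
    induction j with
    | zero =>
      intro _h
      have hc : ((B - 1:ℕ):ℚ) = (B:ℚ) - 1 := by push_cast [hB1]; ring
      simp [hq0, hc]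
    | succ j ih =>
      intro h
      have ihj := ih (by omega)
      have hs := hsmall (j+1) (by omega) (by omega)
      rw [Finset.sum_range_succ, Finset.sum_range_succ (f := q)]
      have hc : ((B - (j+1+1):ℕ):ℚ) = (B:ℚ) - (j:ℚ) - 2 := by
        have h2 : j + 2 ≤ B := by omega
        push_cast [h2]; ring
      have hc' : ((B - (j+1):ℕ):ℚ) = (B:ℚ) - (j:ℚ) - 1 := by
        have h2 : j + 1 ≤ B := by omega
        push_cast [h2]; ring
      rw [hc]
      rw [hc'] at ihj
      push_cast
      linear_combination ihj + hs
  have h := aux (B-1) (by omega)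
  have h1 : B - 1 + 1 = B := by omega
  rw [h1] at h
  have h2 : ((B - B : ℕ):ℚ) = 0 := by simp
  rw [h2, zero_mul, add_zero] at h
  exact h


theorem sum_coeff : ∀ B : ℕ, (∑ j ∈ range B, ((j:ℚ)+1)) * 2 = B * (B+1) := by
  intro B
  induction B with
  | zero => simp
  | succ B ih =>
    rw [Finset.sum_range_succ]
    push_cast
    push_cast at ih
    linarith [ih]

theorem target_mem (hB : B ≠ 0)
    (hL : ∀ n, ∑ j ∈ range B, ((j:ℚ)+1) * q (n + j) = B) (n : ℕ) :
    mw q hB n ≤ 2/((B:ℚ)+1) ∧ 2/((B:ℚ)+1) ≤ Mw q hB n := by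
  have hBpos : (0:ℚ) < (B:ℚ) := by exact_mod_cast Nat.pos_of_ne_zero hB
  have hS2 := sum_coeff B
  set S := ∑ j ∈ range B, ((j:ℚ)+1) with hSdef
  have hB1pos : (0:ℚ) < (B:ℚ) + 1 := by linarith
  have hSpos : 0 < S := by nlinarith
  constructor
  · have hlo : S * mw q hB n ≤ (B:ℚ) := by
      rw [← hL n, hSdef, Finset.sum_mul]
      refine Finset.sum_le_sum fun j hj => ?_
      have := mw_le q hB n j (mem_range.mp hj)
      have hj0 : (0:ℚ) ≤ (j:ℚ) + 1 := by positivity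
      nlinarith
    rw [le_div_iff₀ hB1pos]
    nlinarith
  · have hhi : (B:ℚ) ≤ S * Mw q hB n := by
      rw [← hL n, hSdef, Finset.sum_mul]
      refine Finset.sum_le_sum fun j hj => ?_
      have := le_Mw q hB n j (mem_range.mp hj)
      have hj0 : (0:ℚ) ≤ (j:ℚ) + 1 := by positivity
      nlinarith
    rw [div_le_iff₀ hB1pos]
    nlinarith

theorem qbound (hrec : ∀ n, (B:ℚ) * q (n + B) = ∑ i ∈ range B, q (n + i))
    (hB : B ≠ 0) (hr0 : 0 ≤ 1 - 2/(B:ℚ)^B)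
    (hL : ∀ n, ∑ j ∈ range B, ((j:ℚ)+1) * q (n + j) = B) (k : ℕ) :
    |q k - 2/((B:ℚ)+1)| ≤
      (1 - 2/(B:ℚ)^B)^(k / B) * (Mw q hB 0 - mw q hB 0) := by
  set t := k / B with ht
  have htk : t * B ≤ k := Nat.div_mul_le_self k B
  have hq1 := window_bounds hrec hB (t * B) k htk
  have hq2 := target_mem hB hL (t * B)
  have hosc := osc_decay hrec hB hr0 t
  rw [abs_le]
  constructor
  · linarith [hq1.1, hq2.2, hosc]
  · linarith [hq1.2, hq2.1, hosc]

end Stmt9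

theorem stmt_9 (b : ℕ) (hb : 2 ≤ b) (q : ℕ → ℚ) (hq0 : q 0 = 1)
    (hq : ∀ n, 1 ≤ n →
      q n = (1 / ((b : ℚ) - 1)) * ∑ d ∈ Finset.Icc 1 (min n (b - 1)), q (n - d)) :
    ∃ C : ℝ, 0 < C ∧ ∃ α : ℝ, 0 < α ∧ α < 1 ∧
      ∀ n, |(q n : ℝ) - 2 / (b : ℝ)| ≤ C * α ^ n := by
  open Finset Stmt9 in
  rcases eq_or_lt_of_le hb with rfl | hb3
  · -- b = 2 : q is constantly 1
    have hq1 : ∀ n, q n = 1 := by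
      intro n
      induction n using Nat.strong_induction_on with
      | _ n ih =>
        rcases Nat.eq_zero_or_pos n with rfl | hn
        · exact hq0
        · have h := hq n hn
          have hmin : min n (2 - 1) = 1 := by omega
          rw [hmin] at h
          simp only [Finset.Icc_self, Finset.sum_singleton] at h
          rw [ih (n-1) (by omega)] at h
          norm_num at h
          exact h
    refine ⟨1, one_pos, 1/2, by norm_num, by norm_num, fun n => ?_⟩
    rw [hq1 n]
    norm_num
  · -- b ≥ 3
    set B : ℕ := b - 1 with hBdef
    have hbB : b = B + 1 := by omega
    have hB2 : 2 ≤ B := by omega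
    have hB : B ≠ 0 := by omega
    have hcast : ((b:ℚ) - 1) = (B:ℚ) := by rw [hbB]; push_cast; ring
    have hBQpos : (0:ℚ) < (B:ℚ) := by exact_mod_cast Nat.pos_of_ne_zero hB
    -- clean recurrence
    have hrec : ∀ n, (B:ℚ) * q (n + B) = ∑ i ∈ range B, q (n + i) := by
      intro n
      have h := hq (n + B) (by omega)
      have hmin : min (n + B) (b - 1) = B := by omega
      rw [hmin, hcast] at h
      have hsum : ∑ d ∈ Finset.Icc 1 B, q (n + B - d) = ∑ i ∈ range B, q (n + i) := by
        rw [← Finset.Ico_add_one_right_eq_Icc, Finset.sum_Ico_eq_sum_range]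
        have h1 : B + 1 - 1 = B := by omega
        rw [h1]
        rw [← Finset.sum_range_reflect (fun i => q (n + i)) B]
        refine Finset.sum_congr rfl fun i hi => ?_
        rw [mem_range] at hi
        congr 1
        omega
      rw [hsum] at h
      rw [h]
      field_simp
    have hsmall : ∀ j, 1 ≤ j → j ≤ B → (B:ℚ) * q j = ∑ k ∈ range j, q k := by
      intro j hj1 hjB
      have h := hq j hj1
      have hmin : min j (b - 1) = j := by omega
      rw [hmin, hcast] at h
      have hsum : ∑ d ∈ Finset.Icc 1 j, q (j - d) = ∑ k ∈ range j, q k := by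
        rw [← Finset.Ico_add_one_right_eq_Icc, Finset.sum_Ico_eq_sum_range]
        have h1 : j + 1 - 1 = j := by omega
        rw [h1]
        rw [← Finset.sum_range_reflect q j]
        refine Finset.sum_congr rfl fun i hi => ?_
        rw [mem_range] at hi
        congr 1
        omega
      rw [hsum] at h
      rw [h]
      field_simp
    have hL := invariant hrec (base_invariant hq0 hB hsmall)
    -- the contraction ratio
    have hBB4 : (4:ℚ) ≤ (B:ℚ)^B := by
      have h1 : (4:ℕ) ≤ B^B := by
        calc (4:ℕ) = 2^2 := by norm_num
          _ ≤ 2^B := Nat.pow_le_pow_right (by norm_num) hB2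
          _ ≤ B^B := Nat.pow_le_pow_left hB2 B
      exact_mod_cast h1
    set rq : ℚ := 1 - 2/(B:ℚ)^B with hrqdef
    have hBBpos : (0:ℚ) < (B:ℚ)^B := by positivity
    have hrq1 : rq < 1 := by
      rw [hrqdef]
      have : 0 < 2/(B:ℚ)^B := by positivity
      linarith
    have hrqhalf : (1:ℚ)/2 ≤ rq := by
      rw [hrqdef]
      have : 2/(B:ℚ)^B ≤ 1/2 := by
        rw [div_le_div_iff₀ hBBpos (by norm_num)]
        linarith
      linarith
    have hrq0 : 0 < rq := lt_of_lt_of_le (by norm_num) hrqhalf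
    have hr0 : 0 ≤ rq := le_of_lt hrq0
    set O : ℚ := Mw q hB 0 - mw q hB 0 with hOdef
    have hO0 : 0 ≤ O := by
      have h1 := mw_le q hB 0 0 (by omega)
      have h2 := le_Mw q hB 0 0 (by omega)
      rw [hOdef]; linarith
    have hqb := fun k => qbound hrec hB hr0 hL k
    -- move to ℝ
    set rr : ℝ := (rq : ℝ) with hrrdef
    have hrr0 : (0:ℝ) < rr := by rw [hrrdef]; exact_mod_cast hrq0
    have hrr1 : rr < 1 := by rw [hrrdef]; exact_mod_cast hrq1
    have hBRpos : (0:ℝ) < (B:ℝ) := by exact_mod_cast Nat.pos_of_ne_zero hB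
    refine ⟨((O:ℝ) + 1)/rr, by positivity, rr ^ ((B:ℝ)⁻¹), 
      Real.rpow_pos_of_pos hrr0 _, 
      Real.rpow_lt_one (le_of_lt hrr0) hrr1 (by positivity), fun k => ?_⟩
    set t : ℕ := k / B with htdef
    have hstep1 : |(q k : ℝ) - 2 / (b:ℝ)| ≤ rr ^ t * (O:ℝ) := by
      have h := hqb k
      have hcast2 : ((|q k - 2/((B:ℚ)+1)| : ℚ) : ℝ) = |(q k : ℝ) - 2 / (b:ℝ)| := by
        push_cast
        rw [hbB]
        push_cast
        ring_nf
      rw [← hcast2]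
      have : ((rq^(k/B) * O : ℚ) : ℝ) = rr ^ t * (O:ℝ) := by push_cast; ring
      rw [← this]
      exact Rat.cast_le.mpr h
    have htk : (k:ℝ) / (B:ℝ) - 1 ≤ (t:ℝ) := by
      have h1 := Nat.div_add_mod k B
      have h2 : k % B < B := Nat.mod_lt k (Nat.pos_of_ne_zero hB)
      have h3 : k < B * t + B := by
        conv_lhs => rw [← h1]
        exact Nat.add_lt_add_left h2 _
      have h4 : (k:ℝ) < (B:ℝ) * (t:ℝ) + (B:ℝ) := by exact_mod_cast h3
      rw [sub_le_iff_le_add, div_le_iff₀ hBRpos]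
      nlinarith
    have hstep2 : rr ^ t ≤ (rr ^ ((B:ℝ)⁻¹)) ^ k / rr := by
      have e1 : (rr ^ ((B:ℝ)⁻¹)) ^ k = rr ^ ((k:ℝ) / (B:ℝ)) := by
        rw [← Real.rpow_natCast (rr ^ ((B:ℝ)⁻¹)) k, ← Real.rpow_mul (le_of_lt hrr0)]
        congr 1
        field_simp
      have e2 : rr ^ t = rr ^ ((t:ℝ)) := (Real.rpow_natCast rr t).symm
      rw [e1, e2]
      have h5 : rr ^ ((k:ℝ)/(B:ℝ) - 1) = rr ^ ((k:ℝ)/(B:ℝ)) / rr := by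
        rw [Real.rpow_sub hrr0, Real.rpow_one]
      rw [← h5]
      exact Real.rpow_le_rpow_of_exponent_ge hrr0 (le_of_lt hrr1) htk
    have hO0R : (0:ℝ) ≤ (O:ℝ) := by exact_mod_cast hO0
    calc |(q k : ℝ) - 2 / (b:ℝ)| ≤ rr ^ t * (O:ℝ) := hstep1
      _ ≤ ((rr ^ ((B:ℝ)⁻¹)) ^ k / rr) * ((O:ℝ) + 1) := by
          apply mul_le_mul hstep2 (by linarith) hO0R
          positivity
      _ = ((O:ℝ) + 1)/rr * (rr ^ ((B:ℝ)⁻¹)) ^ k := by ring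
end

section
/- Define q : ℕ → ℚ by q(0) = 1 and, for n ≥ 1, q(n) = (1/9) · Σ_{d=1}^{min(n, 9)} q(n-d). Then |q(666) - 1/5| < 10^{-60}. -/
set_option maxRecDepth 10000
set_option synthInstance.maxSize 1000

abbrev St := ℕ×ℕ×ℕ×ℕ×ℕ×ℕ×ℕ×ℕ×ℕ

def nxt (p : St) : St :=
  (p.2.1, p.2.2.1, p.2.2.2.1, p.2.2.2.2.1, p.2.2.2.2.2.1, p.2.2.2.2.2.2.1,
   p.2.2.2.2.2.2.2.1, p.2.2.2.2.2.2.2.2,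
   p.2.2.2.2.2.2.2.2 + 9*p.2.2.2.2.2.2.2.1 + 81*p.2.2.2.2.2.2.1 + 729*p.2.2.2.2.2.1
   + 6561*p.2.2.2.2.1 + 59049*p.2.2.2.1 + 531441*p.2.2.1 + 4782969*p.2.1 + 43046721*p.1)

def T (k : ℕ) : St := nxt^[k] (1,1,10,100,1000,10000,100000,1000000,10000000)

def L1 : St := (1667049683626944880666566582734371297465588147526340927123587463920125352207114778700740455488815378457321,15003447152588245294309693402489216055047727989142124134712242440025304350168427304396616844754358047145920,135031024371258670412858736762641105609725567590152420727447525235628431025145257264527948452421046763611800,1215279219323483817673428840633515973907033335584158944668118623408650983748337349669690170968230235281514000,10937512973835624860417342641845557233710049032605243156481486763599371743152177923379713989670015015098450000,98437616764678622046834412477704926887018951903210733179692407802611591132036747122011788830075945913372800000,885938550887691906134293020464793033025957740826006461537580472241735822477968910413090940694427172681016000000,7973446958038143422540309462797689152839348874925434135691437207385232477524005938444572867769866610838440000000,71761022622550391619212235914350756835664707215969347801500285758283472151115021144605653833869933211918200000000)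
def L2 : St := (13895273237614519273026968585346570859335182831422828556348418914094486424855410358988740771152587744773167318695134402208517851048907474734821029788522368401228925028081609973950145750449603296631706561966255130,125057459138530673457273189728145244561135926624328892588647030351723365433335618670751984667939478301530256772567534253802193724875150187467551919974771840212126632790484077177393188731427840864071316150801763600,1125517132246776061115166121167224972695561282642185334750300111372238471639049590510954831235945397727740688417587660196726532571958983802183631097287996847434283917974327984187503642595609987090894309018944800000,10129654190220984550031910392595482271258763070988580799834915509542005568763651551871138144513025471395080981620048442560059735155303055123026249705445583839690932441831766235881496491650257467183910247864527500000,91166887711988860950255713131753228197697523422033256727099266328134819675638198252874171504731649710544341302877580661760482311717040333783128190711845138440133474054669440313689535259216231485090483203476643000000,820501989407899748552220251626522565528860297777911525365726600568117082048780793565386055414114518942951523971048422520677654676743813796435228508537784210124922832637945874912609215979538314188784110121981940000000,7384517904671097736970803366903137630612574008655557225731287073185244699380146025529401131276440479588551330178594339769771001689334435625500849409623420996809170698229513375066295940780805794837561588802558300000000,66460661142039879632749868874419519237487831562245827672633527743150663377568293546440955107205871312976020378949087267677182505293816012011110097673214588776753666613490598848613040140175521665293275356109042500000000,5981459502783589166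94834840750165596627466760424280760953031301716544152576824468368703679301328826835139747118663218654070011199790485626976072216072426527299863865819604561365671974517321742450544569724338565447945031)
def L3 : St := (115820554270088079210249184047910461495778927603516672114054754988800357827210381987719893353832779068571696129007583263528379001362753760136219648281060578441456497888952353799141433435285593256165577403714236683441577635446868305198832111219767858447023157916527959129738775797087926434399852061456461488015851439500,1042384988430792712892242656431212405852992014700691145917531702822600384610316801094627949308633225572253574841389889098386371280311524647300820250926110971132999061248632147851756566856137040976930752760383579001500258857514537807170740285539200169592140234418468880035493679155622424260968936902289387513593075890000,9381464895877134416030183907880918854419377688184853582395874844902472897067007828535505256031018101588837152460403460437487013753503422477042669394941974770862264609566086842838825893346022919356589945039512061693950673543402797638626430761987261455423224771833487031900304169072880239652173420268722591106204644650000,84433184062894209744271655170927386601234913413770696939755187899091698902712302773253598457410371282789721596082608752485824178593831958289841949330763499209748379190491662419558091689244491088167553458493945125629354975229890640743883846112349399102312713038481819195843437677636397322880567254912537407746372651200000,7598986565660478876984448965383370845591591587769252071995835508403845443138384712384343310587812850543893386675638512729296439905804498603937685779904169455926830913279353176353040305734035436343468809996848310042709899842598067390275090802137197846656191737402250083951168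67642491760422772767858793310048416563583000000,6839087909094430989286004068844984111840438335578236492554452836326294228959766496586755959866003709770673032697103281285980900383171831798596214683746506107104112401708959838041887581746046903850304986881020350517822837834679730737274216100375764644851769936903814993068715168133557578490758749738808666948189687100000000,61551791181849878903574036619604842422396925655329903417480081100431961226211487079529727377207602080630842962089346340415371385576678694999337345617205270629921044298568259061142536043720318192319497981716648982129789549727115884751763085516679708902467436130283405295145156621702361380951709531869341088552887774500000000,553966120636648910132166329576446035046141814711779325206422831506363992819136423200225020463347404502790874352064166169017672384034924190597796016080725541423320991322597678493811588080864005542838721335580178514707712031807113438568113953699039972557277368979579223916245314839795130948565301290430786862723932403255743441,4985695085729840191189496966188040130379378695478688274953233473376716766713549206323229764016296098059018185955866208891179869145155953205500731153726868933207144977606924501277519930786671406414428475205576928201309174479090567227505757365573677579072523458755500287359389237493592563659052197618610127352441448800208513381)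
def L4 : St := (965393091739831422926908548301466950552427837108159604087010896629948752725029832660648124881298890710952759339610712166286784291313725967992749134861128946501772998017998059701613498450505020517834520716843630353553201185128798481523577771098696585726571344136680096816026193546779184838506197857802211139749192565787975882548539925652443034583850470454972927501495498627570779986833490214828480885478294714592673549465000,8688537825658482806342176934713202554971856964647342112227397875117361430419384379319364270868002284037874895929866763045988175319248435932928029725680270697689990976710901371423555783519326346613037980403944033698862737794644185494262367498880996953409483323431106394819507689810380356173866051309987618012417652303726490976527742271741497599592230364585865834683936759198541114234840628932518844053292618360268049624200000,78196840430926345257079592412418822994746737080464438139218785610497711047261376373078454864966792611906233266135575695283061405960525033864278296515733394053203964776159315726245319624159984564406148386379601279706057584695058433110380046373799129269128835545386061803486395123332704721979391721308073636666910130326154835760704181339499130793384670369706169602539462063531483119441997979648638739212013124253887477480400000,703771563878337107313716331711769406952720545825363642080991352022111367841559214120865286490284399270443484855392650152152637881851006215140952360922532318227926802072334722698452494370380055844678861042907674112870062076331937086936765121718703761771394591263149049076064768012489210135778418258938691261810736096110900062777081048241447730387564627567033918869502644049667659490587590861990741704503032332746493022700000000,6333944074905033965823446985405924662574482736116760357151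466610006245746037638523198076246098167565394675156169500521707840828323171657318415299991011759985586186747404657309072827983987289099991026402155807150669098716343126433386653194897266363117538793551360489926879802314599267456144408788321530940679497775274877772976722405408924916578651087529846428281092086982135837217952672804620704576430360585353386668296000000000,57005496674145305692411022868653321963170327009149758407083304125019969493792827766821857976091575684760054895261907508471203448677114753684822965153881893094497709880233881272293697150654839248554524262859581229826181712362124442250248462604350811789011682070818085349867323380874864604911013692979032661943369244909319181001852710251730737459741706122298875143738049364411836941632129930211915810386271089139265702815000000000,513049470067307751231699205817879897668532877265489366194566615387037604329376818059698220979710624161007105613348352821148462490599028975313986038711271090478597719843641624449703565616159801371212428588897264154507157331222719347225415504449515432145355834796560442663473483691746242653533959021413251536450573187004207489509297983333689828641554047586969478911918955579897283918690060362900880584942034702488490944869419316951,4617445230605769761085292852360919079016796146587689334248205270122524728796104110984935490061412185777060766326205462304971829370763934753658030126875116046255995878491404828692447890333262686695933863567390740842564390416981324292102259889983688310781125550225640239414977602180703682409253846446582781172178130028811835143590879565558511053659536387074512213595309787431774579463590905584125087553579253361184735786558111944901,4155700707545192784976763567124827171115117133385824506344482883008656201704526284990420599220014169659975688087467884032628154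3816465235678919124961648746781496442870395276781821196585237573001050860093877162056488712620107692015136819327316223185633060004049184617168097732334851259684816042602972019898692088278273303960831658954517875348633834634296453306492866752507872774356432934919672413201520823292704723229049832190225960)
def L5 : St := (8046791240574174597468136690253168592533355510275649650024636557673339480724705722721519541591103287272063432039386062735587675979018898152008583786657588060237481494491182302482433056519274619001387200838893438165573314271482714296011200873374581310304178956360007092825757300764846991932326580693266754753656153610930090602630216571538854099613227476997881064738853477917289553527605028323715354610924517450526355797699215380169743584118176927229346621914189167692849647227154669514966969299223797935815497419977150261772860000,72421121165167571377213230212278517332800199592480848576421052625969257140478032235968158048759245678149983597753068923721631411866798915897773656925142327617188726912196235674640622202803929341332948461130967129080388246163744337784973038978592165346247275810806321093266861408002673645531990448068438372946385067687370710293628660908205753728084936024491235368141449958977080747450936193532563594904646034765281904420109307473911902746870158980666760451851419311917831180238920594979021516321269854363183643620522945143371200000,6517900904865081423949190719105066559952017963323276481904620049977041249325574804935878716187035408139646626025652733324555359687765168453940405316430989517104271686826123430694748836252234135092314441636552396613792463871569736600182494234676140725556336958319390626472802208140364709066813949540806184774084910166597989389002972767316541616200239005468487925539835103748251477033034377640169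57073597532771843810889801441881962208804682682820210782752662874306891415911270533940175940302790076475291147716014071958158109772000000,5866110814378573281554271647194559903956816166990948855592814984366148797088515993205086746208626498999090295874142280554910741393480524039983812689196562124935995777985826543110582727682229593864873284958024990688384135707217042847201471987618636407382541544529934747433387462153741903182868270022103375028445598754506501327961358362571232909869256888685370533861988051526765325880731308800019950026114373516187392190506687548793381594008985536876000342130775884817758248307829090804224532039937980333634736390102681413747020000000,52794997329407159533988444824751039135611345502918539347081193114680043241302615849505304665740132581691383735131289041830353542297953884788183957201944747217604931054607548769098555944383591045793171167487268723237186542816636639193102065811825018091256657103157636437690984966717149330560001322816548624403430274577507172548653338724873054977506727504166066980657297032320339563095850310259546412445393578067016235296872762892004420425325423785361589759643960874137195531146931556584336298106873832497605703836137390179069700000000,475154975964664435805896003422759352220502109526266849369895538566449500941486250219698643656374954873979940821713601066594575946558495201588440814756002549116485549403143899949068435647313236242973732541475297998362175068702190987726010448417328529793760584300808089508057246595151516060087210768276203055002656394561443696373449869122910252827178128048308143025802152007787812167248358670696851663814391267449154585624224310145229922392165075453149416191240010579595483340733050720157603114101517766830185004098260476105905098426561,4276394783681979922253064030804834169984518985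736401614301079274961358397373659283886128948698617604455010917850007788763064259423006751659797937693622069544305626567450948112397069127507274242799319623063315521280603298701329851504512462863405759696698154837158879436531737008981886969544714927717647870009519075141374032254483899866090908102502155751796492188104321227016701395560872053998870468371061133691259644688586377800481456889231849040338872177631241241713399834748645451526248127560085270369625703822033482175727448217300721,38487553053137819300277576277243507529860670871627614471241257403702505358608061860553354951753850773097893500693831508578543875106448218745297224031278875197060701555622908457319764576003504439323320133163697034193018278054213723991712522901423018430108795667251282455969388542479388674073703303528520243925388719576898479244025017136463364474555871793987991621960746544386801661827471470091163400337777865369578387384815943078821472816306057582282260357115675461449651479008233518875992164006282395368469061741660795328630174982275370,346387977478240373702498186495191567768746037844648531228147055306737655957592199914056295556144355502569732964439756718051587347579188916589967468186006087257999105967217602264320578901489037707306295896581907052206323275515922264529754677125297972470245999298360148764095895338384530748077553415049845540185396277351943399585114107406551402472049831569936492297209355792941357779656083311894233424585632418459305674119611677431213850951618917887031549346206937240593626951801599281053374550828813214220451693421042797942524219876749300)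
def L6 : St := (67072003957152089994007282402178293562659723859308079417378010147917308504791408956458980115588098544832352934205821162785509634852309933778673803317023822428790751410564630912732675226130221195954583832518116062232132317527115186287966159928362735416117828632085562780591212872178540320655396805287813197930438000596001984638012071841518220236456458532490490308655415665938712316701573324633224832422285893860914002046100884872124694460106221093779764674439120107026353505325324218960202179039384702011311267763179299063538588479967204114608449603102519994141366640807202899019238235033002199785195257797538993376610275501957173900000,603648035614368809946065541619604642063937514733772714756402091684733026483006501028889317091939270046415535397169729849373022685147979967952094378162555840132427390676115317300957468211054772911211835290868817192487309648810893399699476771305118104900181708061802894446666401280307721124256643950790324297821762324930251894514595104259270381123723664130172807030897608001173564025130849088575944644424347776426832616424935648393643522097100715214880749860951495252662341489050872167529498426209485995802460198341252383649010766208786227434498005563818430768614540271275725933491464621634186384311401542735788359046628242247943628000000,5432832320529319289514589874576441778575437632603954432807618828606298873255806661415623820879888331106774758515874281459547901762718235394127458061483499481488499349948885299485091788891752289576156928996711315533851488260330900107494642132953206925308064350525757144832165431929942857474134470247210664805137651314008869696467150638941384468221463457015714828246868514584859299329788858988135666423918615103072813372457802842290726108677887353284359145983567056557759189656277097375544065142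554030025185672251879396946229696709263276354312403975945299097267887665633416807904994660456569682410838599934012186528451476374023094220000000,48895490884763873605631308871187976007178938693435589895268569474094930026330695555165896663611080182660423181267064011721049517359659948609679582752434474823447696655025318944281841620420860022252083092960565113057737490611017960056301206497950686475711979004179246458587747068346522119344126445471099029219407580403659405654054126375436926842427099510927294605026508691856407015435139874387128721247050166362135582756419719850273961073729073618411560023644821670986487342159062510621060576951036826918573774106717231716253191445344385124821161366453688058403242495476060726776919438432956658176872938645925898084990592445753996100000000,440059417962874862450681779840691784064610448240920309057417125256262876248512812283269790289506072454952404755821056967425058666151494674323396420794678244771134069585384200964611680130738022916652796995501348707375810349705773993414573613891110809935504003520110390239943685928983389893793467263532093956267311901788164601203256841654997880982586978545042702923041069954678189263180413519634323265345444598545833533885276299302821227514685847838086430719791296459590822000381014531105550003440109824723043939013833054406419169295688361316573338914064866845758453841714605214937668344917039180593714935212999264020885428314700441221543271,3960534761665873762056136018566226056581494034168282781516754126326186218344159533767405216234417497485708769993028801819084989128298991176890637836917019997723611668882250374600231584163590880709301967315751181827424882381573668305336675720512773202743606675885717719087427713202669739866925765048666824083313045867613091899021617439234866692325366263129655081149526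059523973925822475071693316750542545088512812493825396306632740857737032494448633490243539706863723996670088879631515512802002467942948128077575413230750016808081739550819972489499820029850337038718125174585472122500795140377544128316548392868150454407200232519884655534841,35644812854992863858505224167096034509233446307514545033650787127481968319567783637779709620456541244967371167914082058030126887071253733663818273229690399966047797994608620187608104642497876017844189690470995095949244849426622913787814764601755453902482434108175900574320151315557251564857969897316017898206201413292957671195750235478747305759610283478486140656392460111190535664458181455877035497100798250228317914292226252523776416613335568169161777615933570888018890474684916359586825807232907154539440450353580476048587188886039456847688063789553305986474293114600463425268064574704287679854011820181723206071772322766005218298206558080,320803315694935774726547017503864310583101016767630905302857084102176184531246156050111078083397708948537079894977541547357264543583794667786080295125503321205895824455400870779297758434510551328874641878455890017434160084240950110118099834388047118526666625518700852032807793029978505744727405120443335762899523213624994062391355959436725178682184761070148784168466244792255157306614090183311937997507005678146575742356942245657661429033795272564181918053819370262498681495779909066384859814645542265199807468828895200265096496524364315597323539207585422739315751875763005441557331782290881954933217226264094885216129565030215352112192150600,2887229841254421972538923157534778795247909150908678147725713756953910643101564829367557325837341280901490202446688322275400450780131754155795537502161248285946322450098931525835484358722055155871896901705769781569688265162827953103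883527276244015093136650939909930355968296552238153313977531278952795261414023135040753786846666688474109553962699352473366453837579127584250570357121846204092063880975751908474144376441545945853394542641226527362510242647143519058193161920715197463315050334013279836126334696686377022556938995762393155871199737689134791034275399355669849514372067863272757699824136105069222051663784565647582848436453289990000)

theorem hT : T 666 = L6 := by
  have h1 : nxt^[111] (1,1,10,100,1000,10000,100000,1000000,10000000) = L1 := by decide
  have h2 : nxt^[111] L1 = L2 := by decide
  have h3 : nxt^[111] L2 = L3 := by decide
  have h4 : nxt^[111] L3 = L4 := by decide
  have h5 : nxt^[111] L4 = L5 := by decide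
  have h6 : nxt^[111] L5 = L6 := by decide
  show nxt^[111+(111+(111+(111+(111+111))))] _ = L6
  rw [Function.iterate_add_apply, Function.iterate_add_apply, Function.iterate_add_apply,
    Function.iterate_add_apply, Function.iterate_add_apply, h1, h2, h3, h4, h5, h6]

theorem invariant (q : ℕ → ℚ) (hq0 : q 0 = 1)
    (hq : ∀ n, 1 ≤ n →
      q n = (1 / (9 : ℚ)) * ∑ d ∈ Finset.Icc 1 (min n 9), q (n - d)) :
    ∀ k, ((T k).1 : ℚ) = 9^k * q k ∧ ((T k).2.1 : ℚ) = 9^(k+1) * q (k+1) ∧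
      ((T k).2.2.1 : ℚ) = 9^(k+2) * q (k+2) ∧ ((T k).2.2.2.1 : ℚ) = 9^(k+3) * q (k+3) ∧
      ((T k).2.2.2.2.1 : ℚ) = 9^(k+4) * q (k+4) ∧ ((T k).2.2.2.2.2.1 : ℚ) = 9^(k+5) * q (k+5) ∧
      ((T k).2.2.2.2.2.2.1 : ℚ) = 9^(k+6) * q (k+6) ∧
      ((T k).2.2.2.2.2.2.2.1 : ℚ) = 9^(k+7) * q (k+7) ∧
      ((T k).2.2.2.2.2.2.2.2 : ℚ) = 9^(k+8) * q (k+8) := by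
  have e1 : q 1 = 1/9 := by
    rw [hq 1 (by norm_num)]; norm_num [hq0]
  have e2 : q 2 = 10/81 := by
    rw [hq 2 (by norm_num)]
    rw [show Finset.Icc 1 (min 2 9) = {1,2} from rfl]
    norm_num [Finset.sum_insert, hq0, e1]
  have e3 : q 3 = 100/729 := by
    rw [hq 3 (by norm_num)]
    rw [show Finset.Icc 1 (min 3 9) = {1,2,3} from rfl]
    norm_num [Finset.sum_insert, hq0, e1, e2]
  have e4 : q 4 = 1000/6561 := by
    rw [hq 4 (by norm_num)]
    rw [show Finset.Icc 1 (min 4 9) = {1,2,3,4} from rfl]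
    norm_num [Finset.sum_insert, hq0, e1, e2, e3]
  have e5 : q 5 = 10000/59049 := by
    rw [hq 5 (by norm_num)]
    rw [show Finset.Icc 1 (min 5 9) = {1,2,3,4,5} from rfl]
    norm_num [Finset.sum_insert, hq0, e1, e2, e3, e4]
  have e6 : q 6 = 100000/531441 := by
    rw [hq 6 (by norm_num)]
    rw [show Finset.Icc 1 (min 6 9) = {1,2,3,4,5,6} from rfl]
    norm_num [Finset.sum_insert, hq0, e1, e2, e3, e4, e5]
  have e7 : q 7 = 1000000/4782969 := by
    rw [hq 7 (by norm_num)]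
    rw [show Finset.Icc 1 (min 7 9) = {1,2,3,4,5,6,7} from rfl]
    norm_num [Finset.sum_insert, hq0, e1, e2, e3, e4, e5, e6]
  have e8 : q 8 = 10000000/43046721 := by
    rw [hq 8 (by norm_num)]
    rw [show Finset.Icc 1 (min 8 9) = {1,2,3,4,5,6,7,8} from rfl]
    norm_num [Finset.sum_insert, hq0, e1, e2, e3, e4, e5, e6, e7]
  intro k
  induction k with
  | zero =>
    refine ⟨?_, ?_, ?_, ?_, ?_, ?_, ?_, ?_, ?_⟩ <;>
      simp [T, hq0, e1, e2, e3, e4, e5, e6, e7, e8] <;> norm_num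
  | succ k ih =>
    obtain ⟨i0, i1, i2, i3, i4, i5, i6, i7, i8⟩ := ih
    have hstep : T (k+1) = nxt (T k) := Function.iterate_succ_apply' nxt k _
    have hq9 : q (k+9) = (1/(9:ℚ)) * (q (k+8) + q (k+7) + q (k+6) + q (k+5) + q (k+4)
        + q (k+3) + q (k+2) + q (k+1) + q k) := by
      rw [hq (k+9) (by omega)]
      rw [show min (k+9) 9 = 9 by omega]
      rw [show (Finset.Icc 1 9 : Finset ℕ) = {1,2,3,4,5,6,7,8,9} from rfl]
      rw [Finset.sum_insert (by decide), Finset.sum_insert (by decide),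
        Finset.sum_insert (by decide), Finset.sum_insert (by decide),
        Finset.sum_insert (by decide), Finset.sum_insert (by decide),
        Finset.sum_insert (by decide), Finset.sum_insert (by decide), Finset.sum_singleton]
      rw [show k+9-1 = k+8 by omega, show k+9-2 = k+7 by omega, show k+9-3 = k+6 by omega,
        show k+9-4 = k+5 by omega, show k+9-5 = k+4 by omega, show k+9-6 = k+3 by omega,
        show k+9-7 = k+2 by omega, show k+9-8 = k+1 by omega, show k+9-9 = k by omega]
      ring
    rw [hstep]
    refine ⟨i1, i2, i3, i4, i5, i6, i7, i8, ?_⟩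
    show ((T k).2.2.2.2.2.2.2.2 + 9*(T k).2.2.2.2.2.2.2.1 + 81*(T k).2.2.2.2.2.2.1
      + 729*(T k).2.2.2.2.2.1 + 6561*(T k).2.2.2.2.1 + 59049*(T k).2.2.2.1
      + 531441*(T k).2.2.1 + 4782969*(T k).2.1 + 43046721*(T k).1 : ℕ) = (9:ℚ)^(k+1+8) * q (k+1+8)
    push_cast
    rw [i0, i1, i2, i3, i4, i5, i6, i7, i8, show k+1+8 = k+9 by omega, hq9]
    ring

theorem stmt_10 (q : ℕ → ℚ) (hq0 : q 0 = 1)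
    (hq : ∀ n, 1 ≤ n →
      q n = (1 / (9 : ℚ)) * ∑ d ∈ Finset.Icc 1 (min n 9), q (n - d)) :
    |q 666 - 1 / 5| < (1 / 10) ^ 60 := by
  have h := (invariant q hq0 hq 666).1
  rw [hT] at h
  have h9 : ((9:ℚ)^666) ≠ 0 := by positivity
  have hq666 : q 666 = ((L6.1 : ℚ)) / 9^666 := by
    field_simp
    linarith [h]
  rw [hq666, show (L6.1 : ℚ) = ((L6.1 : ℕ) : ℚ) from rfl]
  rw [show ((L6.1 : ℕ) : ℚ) = (Nat.cast (L6.1) : ℚ) from rfl]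
  rw [abs_sub_lt_iff]
  constructor <;>
  · rw [show (L6 : St).1 = 67072003957152089994007282402178293562659723859308079417378010147917308504791408956458980115588098544832352934205821162785509634852309933778673803317023822428790751410564630912732675226130221195954583832518116062232132317527115186287966159928362735416117828632085562780591212872178540320655396805287813197930438000596001984638012071841518220236456458532490490308655415665938712316701573324633224832422285893860914002046100884872124694460106221093779764674439120107026353505325324218960202179039384702011311267763179299063538588479967204114608449603102519994141366640807202899019238235033002199785195257797538993376610275501957173900000 from rfl]
    rw [show (9:ℚ)^666 = ((9:ℚ)^111)^6 by rw [← pow_mul]]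
    norm_num
end
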